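/- For every complex number λ with |λ| < 1 and every z ∈ ℂ with |z| = 1, the modulus of the complex derivative of τ_λ at z equals 2·(1 − Re(conj(λ)·z))/(1 − 2·Re(conj(λ)·z) + |λ|²), and this quantity is strictly greater than 1. In particular τ_λ is an expanding circle map: inf_{|z|=1} |τ_λ'(z)| > 1. -/

import Mathlib

private lemma real_aux (a r : ℝ) (h0 : 0 ≤ a) (ha : a < 1) (hr : |r| ≤ a) :
    2 / (1 + a) ≤ 2 * (1 - r) / (1 - 2 * r + a ^ 2) := by
  have hra := abs_le.mp hr
  have hD : 0 < 1 - 2 * r + a ^ 2 := by nlinarith [sq_nonneg (1 - a)]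
  rw [div_le_div_iff₀ (by linarith) hD]
  nlinarith [mul_nonneg (by linarith : (0:ℝ) ≤ a + r) (by linarith : (0:ℝ) ≤ 1 - a)]

private lemma deriv_aux (lam z : ℂ) (hlam : ‖lam‖ < 1) (hz : ‖z‖ = 1) :
    ‖deriv (fun w : ℂ => w * (lam - w) / (1 - (starRingEnd ℂ) lam * w)) z‖ =
      2 * (1 - ((starRingEnd ℂ) lam * z).re) /
        (1 - 2 * ((starRingEnd ℂ) lam * z).re + ‖lam‖ ^ 2) := by
  set c := (starRingEnd ℂ) lam with hc
  have habsu : ‖c * z‖ = ‖lam‖ := by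
    rw [norm_mul, hz, mul_one, hc, Complex.norm_conj]
  have hu1 : ‖c * z‖ < 1 := by rw [habsu]; exact hlam
  have hne : (1 : ℂ) - c * z ≠ 0 := by
    intro h
    have h1 : (1 : ℂ) = c * z := by linear_combination h
    rw [← h1] at hu1
    simp at hu1
  have hr1 : ((c * z).re) < 1 :=
    lt_of_le_of_lt (le_trans (Complex.re_le_norm _) habsu.le) hlam
  have hd : HasDerivAt (fun w : ℂ => w * (lam - w) / (1 - c * w))
      (((lam - 2 * z) * (1 - c * z) - z * (lam - z) * (-c)) / (1 - c * z) ^ 2) z := by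
    have h1 : HasDerivAt (fun w : ℂ => w * (lam - w)) (lam - 2 * z) z := by
      have := (hasDerivAt_id z).mul ((hasDerivAt_const z lam).sub (hasDerivAt_id z))
      exact this.congr_deriv (by simp; ring)
    have h2 : HasDerivAt (fun w : ℂ => 1 - c * w) (-c) z := by
      have := (hasDerivAt_const z (1 : ℂ)).sub ((hasDerivAt_id z).const_mul c)
      exact this.congr_deriv (by simp)
    exact h1.div h2 hne
  rw [hd.deriv]
  have hzz : z * (starRingEnd ℂ) z = 1 := by
    rw [Complex.mul_conj]
    norm_cast
    rw [← Complex.sq_norm, hz]; norm_num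
  have h2 : c * z + lam * (starRingEnd ℂ) z = ((2 * (c * z).re : ℝ) : ℂ) := by
    have := Complex.add_conj (c * z)
    rw [map_mul, hc, Complex.conj_conj] at this
    exact this
  have hnum : (lam - 2 * z) * (1 - c * z) - z * (lam - z) * (-c)
      = z * (((2 * (c * z).re : ℝ) : ℂ) - 2) := by
    linear_combination z * h2 - lam * hzz
  have habs_num : ‖z * (((2 * (c * z).re : ℝ) : ℂ) - 2)‖
      = 2 * (1 - (c * z).re) := by
    have hcast : (((2 * (c * z).re : ℝ) : ℂ) - 2) = ((2 * (c * z).re - 2 : ℝ) : ℂ) := by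
      push_cast; ring
    rw [hcast, norm_mul, hz, one_mul, Complex.norm_real, Real.norm_eq_abs, abs_of_nonpos (by linarith)]
    ring
  have hden : ‖1 - c * z‖ ^ 2
      = 1 - 2 * (c * z).re + ‖lam‖ ^ 2 := by
    rw [Complex.sq_norm, ← habsu, Complex.sq_norm, Complex.normSq_apply, Complex.normSq_apply]
    simp only [Complex.sub_re, Complex.sub_im, Complex.one_re, Complex.one_im]
    ring
  rw [hnum, norm_div, habs_num, norm_pow, hden]

theorem circle_map_expanding (lam : ℂ) (hlam : ‖lam‖ < 1) :
    (∀ z : ℂ, ‖z‖ = 1 →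
      ‖deriv (fun w : ℂ => w * (lam - w) / (1 - (starRingEnd ℂ) lam * w)) z‖ =
        2 * (1 - ((starRingEnd ℂ) lam * z).re) /
          (1 - 2 * ((starRingEnd ℂ) lam * z).re + ‖lam‖ ^ 2) ∧
      1 < 2 * (1 - ((starRingEnd ℂ) lam * z).re) /
          (1 - 2 * ((starRingEnd ℂ) lam * z).re + ‖lam‖ ^ 2)) ∧
    1 < ⨅ z : Metric.sphere (0 : ℂ) 1,
        ‖deriv (fun w : ℂ => w * (lam - w) / (1 - (starRingEnd ℂ) lam * w)) (z : ℂ)‖ := by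
  set a := ‖lam‖ with ha
  have h0a : 0 ≤ a := norm_nonneg lam
  have hbd : 1 < 2 / (1 + a) := by
    rw [lt_div_iff₀ (by linarith)]
    linarith
  have hrabs : ∀ z : ℂ, ‖z‖ = 1 → |((starRingEnd ℂ) lam * z).re| ≤ a := by
    intro z hz
    refine le_trans (Complex.abs_re_le_norm _) ?_
    rw [norm_mul, hz, mul_one, ha, Complex.norm_conj]
  constructor
  · intro z hz
    refine ⟨deriv_aux lam z hlam hz, ?_⟩
    exact lt_of_lt_of_le hbd (real_aux a _ h0a hlam (hrabs z hz))
  · haveI : Nonempty (Metric.sphere (0 : ℂ) 1) := ⟨⟨1, by simp⟩⟩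
    refine lt_of_lt_of_le hbd (le_ciInf fun z => ?_)
    have hz : ‖(z : ℂ)‖ = 1 := by
      have := z.2
      simpa [Complex.dist_eq] using this
    rw [deriv_aux lam (z : ℂ) hlam hz]
    exact real_aux a _ h0a hlam (hrabs _ hz)
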